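/- Let T > 0, let f : ℝ → ℝ be a continuous T-periodic function with ∫₀ᵀ f(t) dt = 0, and let α ∈ (0,1). Then for every t ≥ 0 the limit Φ(t) = lim_{n→∞} (1/Γ(α)) ∫_{t−nT}^{t} (t−s)^{α−1} f(s) ds exists (the limit taken over natural numbers n), the resulting function Φ is continuous on [0,∞), and Φ is T-periodic: Φ(t+T) = Φ(t) for all t ≥ 0. -/

import Mathlib

open MeasureTheory intervalIntegral Filter Set

private lemma weyl_intable {α : ℝ} (hα : α ∈ Set.Ioo (0 : ℝ) 1) {f : ℝ → ℝ}
    (hf : Continuous f) (t a b : ℝ) :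
    IntervalIntegrable (fun u => u ^ (α - 1) * f (t - u)) volume a b :=
  (intervalIntegral.intervalIntegrable_rpow' (by linarith [hα.1])).mul_continuousOn
    ((hf.comp (continuous_const.sub continuous_id)).continuousOn)

private lemma weyl_per_zero {T : ℝ} (hT : 0 < T) {f : ℝ → ℝ}
    (hper : Function.Periodic f T) (hmean : (∫ t in (0 : ℝ)..T, f t) = 0) (t a : ℝ) :
    (∫ v in a..(a + T), f (t - v)) = 0 := by
  have hg : Function.Periodic (fun v => f (t - v)) T := by
    intro v
    simp only
    rw [show t - (v + T) = (t - v) - T by ring, hper.sub_eq]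
  rw [hg.intervalIntegral_add_eq a 0, zero_add]
  have h1 := intervalIntegral.integral_comp_sub_left (a := 0) (b := T) f t
  rw [sub_zero] at h1
  have h2 := hper.intervalIntegral_add_eq (t - T) 0
  rw [zero_add, show t - T + T = t by ring] at h2
  rw [h1, h2, hmean]

private lemma weyl_cont {α : ℝ} (hα : α ∈ Set.Ioo (0 : ℝ) 1) {f : ℝ → ℝ}
    (hf : Continuous f) {M : ℝ} (hM : ∀ x, |f x| ≤ M) {a b : ℝ} (ha : 0 ≤ a) (hab : a ≤ b) :
    Continuous fun t => ∫ u in a..b, u ^ (α - 1) * f (t - u) := by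
  apply intervalIntegral.continuous_of_dominated_interval
    (bound := fun u => u ^ (α - 1) * M)
  · intro x
    exact (weyl_intable hα hf x a b).def'.aestronglyMeasurable
  · intro x
    filter_upwards with u hu
    rw [Set.uIoc_of_le hab] at hu
    have hu0 : 0 < u := lt_of_le_of_lt ha hu.1
    rw [Real.norm_eq_abs, abs_mul, Real.abs_rpow_of_nonneg hu0.le, abs_of_pos hu0]
    exact mul_le_mul_of_nonneg_left (hM _) (Real.rpow_nonneg hu0.le _)
  · exact (intervalIntegral.intervalIntegrable_rpow' (by linarith [hα.1])).mul_const M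
  · filter_upwards with u _
    exact continuous_const.mul (hf.comp (continuous_id.sub continuous_const))

private lemma weyl_bound_zero {T : ℝ} (hT : 0 < T) {α : ℝ} (hα : α ∈ Set.Ioo (0 : ℝ) 1)
    {f : ℝ → ℝ} (hf : Continuous f) {M : ℝ} (hM0 : 0 ≤ M) (hM : ∀ x, |f x| ≤ M) (t : ℝ) :
    ‖∫ u in (0 : ℝ)..T, u ^ (α - 1) * f (t - u)‖ ≤ M * (T ^ α / α) := by
  have hle : ‖∫ u in (0 : ℝ)..T, u ^ (α - 1) * f (t - u)‖
      ≤ |∫ u in (0 : ℝ)..T, u ^ (α - 1) * M| := by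
    apply intervalIntegral.norm_integral_le_abs_of_norm_le
    · filter_upwards [MeasureTheory.ae_restrict_mem measurableSet_uIoc] with u hu
      rw [Set.uIoc_of_le hT.le] at hu
      have hu0 : 0 < u := hu.1
      rw [Real.norm_eq_abs, abs_mul, Real.abs_rpow_of_nonneg hu0.le, abs_of_pos hu0]
      exact mul_le_mul_of_nonneg_left (hM _) (Real.rpow_nonneg hu0.le _)
    · exact (intervalIntegral.intervalIntegrable_rpow' (by linarith [hα.1])).mul_const M
  have hval : (∫ u in (0 : ℝ)..T, u ^ (α - 1) * M) = M * (T ^ α / α) := by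
    rw [intervalIntegral.integral_mul_const, integral_rpow (Or.inl (by linarith [hα.1]))]
    rw [show α - 1 + 1 = α by ring, Real.zero_rpow (ne_of_gt hα.1)]
    ring
  rw [hval, abs_of_nonneg (mul_nonneg hM0 (div_nonneg (Real.rpow_nonneg hT.le _) hα.1.le))] at hle
  exact hle

private lemma weyl_bound_succ {T : ℝ} (hT : 0 < T) {α : ℝ} (hα : α ∈ Set.Ioo (0 : ℝ) 1)
    {f : ℝ → ℝ} (hf : Continuous f) (hper : Function.Periodic f T)
    (hmean : (∫ t in (0 : ℝ)..T, f t) = 0)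
    {M : ℝ} (hM0 : 0 ≤ M) (hM : ∀ x, |f x| ≤ M) (t : ℝ) (k : ℕ) :
    ‖∫ u in (((k : ℝ) + 1) * T)..(((k : ℝ) + 2) * T), u ^ (α - 1) * f (t - u)‖
      ≤ (1 - α) * M * T ^ α * ((k : ℝ) + 1) ^ (α - 2) := by
  set a : ℝ := ((k : ℝ) + 1) * T with ha_def
  set b : ℝ := ((k : ℝ) + 2) * T with hb_def
  have ha : 0 < a := by positivity
  have hab : a ≤ b := by
    rw [ha_def, hb_def]
    nlinarith [hT]
  have hba : b - a = T := by rw [ha_def, hb_def]; ring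
  have hcomp : Continuous fun v => f (t - v) := hf.comp (continuous_const.sub continuous_id)
  set F : ℝ → ℝ := fun x => ∫ v in a..x, f (t - v) with hF_def
  have hFderiv : ∀ x : ℝ, HasDerivAt F (f (t - x)) x := fun x =>
    (hcomp.integral_hasStrictDerivAt a x).hasDerivAt
  have hu : ∀ x ∈ uIcc a b, HasDerivAt (fun y : ℝ => y ^ (α - 1)) ((α - 1) * x ^ (α - 2)) x := by
    intro x hx
    rw [uIcc_of_le hab] at hx
    have hx0 : 0 < x := lt_of_lt_of_le ha hx.1
    have := Real.hasDerivAt_rpow_const (x := x) (p := α - 1) (Or.inl hx0.ne')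
    rw [show α - 1 - 1 = α - 2 by ring] at this
    exact this
  have hu' : IntervalIntegrable (fun x : ℝ => (α - 1) * x ^ (α - 2)) volume a b := by
    apply ContinuousOn.intervalIntegrable
    apply continuousOn_const.mul
    apply ContinuousOn.rpow_const continuousOn_id
    intro x hx
    rw [uIcc_of_le hab] at hx
    exact Or.inl (ne_of_gt (lt_of_lt_of_le ha hx.1))
  have hv' : IntervalIntegrable (fun x : ℝ => f (t - x)) volume a b := hcomp.intervalIntegrable a b
  have parts := intervalIntegral.integral_mul_deriv_eq_deriv_mul hu (fun x _ => hFderiv x) hu' hv'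
  have hFa : F a = 0 := intervalIntegral.integral_same
  have hFb : F b = 0 := by
    rw [hF_def]
    simp only
    rw [show b = a + T by rw [← hba]; ring]
    exact weyl_per_zero hT hper hmean t a
  rw [hFa, hFb, mul_zero, mul_zero, sub_zero, zero_sub] at parts
  rw [parts, norm_neg]
  have key : ‖∫ x in a..b, (α - 1) * x ^ (α - 2) * F x‖
      ≤ (1 - α) * a ^ (α - 2) * (M * T) * |b - a| := by
    apply intervalIntegral.norm_integral_le_of_norm_le_const
    intro x hx
    rw [Set.uIoc_of_le hab] at hx
    have hx0 : 0 < x := lt_trans ha hx.1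
    have hFx : ‖F x‖ ≤ M * T := by
      have h1 : ‖F x‖ ≤ M * |x - a| :=
        intervalIntegral.norm_integral_le_of_norm_le_const fun v _ => by
          rw [Real.norm_eq_abs]; exact hM _
      have h2 : |x - a| ≤ T := by
        rw [abs_of_nonneg (by linarith [hx.1])]
        linarith [hx.2, hba]
      exact h1.trans (mul_le_mul_of_nonneg_left h2 hM0)
    have hxa : x ^ (α - 2) ≤ a ^ (α - 2) :=
      Real.rpow_le_rpow_of_nonpos ha hx.1.le (by linarith [hα.2])
    calc ‖(α - 1) * x ^ (α - 2) * F x‖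
        = (1 - α) * x ^ (α - 2) * ‖F x‖ := by
          rw [norm_mul, norm_mul, Real.norm_eq_abs, Real.norm_eq_abs,
            abs_of_nonpos (by linarith [hα.2] : α - 1 ≤ 0),
            abs_of_nonneg (Real.rpow_nonneg hx0.le _)]
          ring
      _ ≤ (1 - α) * a ^ (α - 2) * ‖F x‖ := by
          apply mul_le_mul_of_nonneg_right _ (norm_nonneg _)
          exact mul_le_mul_of_nonneg_left hxa (by linarith [hα.2])
      _ ≤ (1 - α) * a ^ (α - 2) * (M * T) := by
          apply mul_le_mul_of_nonneg_left hFx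
          exact mul_nonneg (by linarith [hα.2]) (Real.rpow_nonneg ha.le _)
  rw [hba, abs_of_pos hT] at key
  refine key.trans (le_of_eq ?_)
  have haT : a ^ (α - 2) = ((k : ℝ) + 1) ^ (α - 2) * T ^ (α - 2) :=
    Real.mul_rpow (by positivity) hT.le
  have hTα : T ^ (α - 2) * (T * T) = T ^ α := by
    have h := Real.rpow_add hT (α - 2) 2
    rw [show α - 2 + 2 = α by ring] at h
    rw [h, Real.rpow_two]
    ring
  rw [haT, ← hTα]
  ring

theorem weyl_integral_exists_continuous_periodic (T : ℝ) (hT : 0 < T)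
    (f : ℝ → ℝ) (hf : Continuous f) (hper : Function.Periodic f T)
    (hmean : (∫ t in (0 : ℝ)..T, f t) = 0)
    (α : ℝ) (hα : α ∈ Set.Ioo (0 : ℝ) 1) :
    ∃ Φ : ℝ → ℝ,
      (∀ t ∈ Ici (0 : ℝ),
        Tendsto (fun n : ℕ =>
            (1 / Real.Gamma α) * ∫ s in (t - (n : ℝ) * T)..t, (t - s) ^ (α - 1) * f s)
          atTop (nhds (Φ t))) ∧
      ContinuousOn Φ (Ici 0) ∧
      ∀ t ∈ Ici (0 : ℝ), Φ (t + T) = Φ t := by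
  -- a uniform bound on f
  obtain ⟨M₀, hM₀⟩ := (isCompact_Icc (a := (0:ℝ)) (b := 0 + T)).exists_bound_of_continuousOn
    hf.continuousOn
  set M : ℝ := max M₀ 0 with hM_def
  have hM0 : 0 ≤ M := le_max_right _ _
  have hM : ∀ x, |f x| ≤ M := by
    intro x
    have hx : f x ∈ Set.range f := ⟨x, rfl⟩
    rw [← hper.image_Icc hT 0] at hx
    obtain ⟨y, hy, hyx⟩ := hx
    rw [← hyx, ← Real.norm_eq_abs]
    exact (hM₀ y hy).trans (le_max_left _ _)
  -- the summands
  set D : ℕ → ℝ → ℝ :=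
    fun k t => ∫ u in ((k : ℝ) * T)..(((k : ℝ) + 1) * T), u ^ (α - 1) * f (t - u) with hD_def
  set C : ℕ → ℝ :=
    fun k => if k = 0 then M * (T ^ α / α) else (1 - α) * M * T ^ α * ((k : ℝ)) ^ (α - 2)
    with hC_def
  have hDC : ∀ k t, ‖D k t‖ ≤ C k := by
    intro k t
    cases k with
    | zero =>
      simp only [hD_def, hC_def, Nat.cast_zero, zero_mul, zero_add, one_mul, if_pos rfl]
      exact weyl_bound_zero hT hα hf hM0 hM t
    | succ n =>
      simp only [hD_def, hC_def, if_neg (Nat.succ_ne_zero n), Nat.cast_succ]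
      have := weyl_bound_succ hT hα hf hper hmean hM0 hM t n
      rw [show ((n : ℝ) + 2) = ((n : ℝ) + 1) + 1 by ring] at this
      exact this
  have hCsum : Summable C := by
    rw [← summable_nat_add_iff 1]
    have h1 : Summable (fun n : ℕ => ((n : ℝ)) ^ (α - 2)) :=
      Real.summable_nat_rpow.mpr (by linarith [hα.2])
    have h2 := ((summable_nat_add_iff 1).mpr h1).mul_left ((1 - α) * M * T ^ α)
    refine h2.congr fun n => ?_
    simp only [hC_def, if_neg (Nat.succ_ne_zero n)]
  have hSummable : ∀ t, Summable (fun k => D k t) :=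
    fun t => Summable.of_norm_bounded hCsum (fun k => hDC k t)
  set Φ : ℝ → ℝ := fun t => (1 / Real.Gamma α) * ∑' k, D k t with hΦ_def
  have key : ∀ (t : ℝ) (n : ℕ),
      (∫ s in (t - (n : ℝ) * T)..t, (t - s) ^ (α - 1) * f s)
        = ∑ k ∈ Finset.range n, D k t := by
    intro t n
    have h1 : (∫ u in (0:ℝ)..((n : ℝ) * T), u ^ (α - 1) * f (t - u))
        = ∫ s in (t - (n : ℝ) * T)..t, (t - s) ^ (α - 1) * f s := by
      have h := intervalIntegral.integral_comp_sub_left (a := 0) (b := (n : ℝ) * T)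
        (fun s => (t - s) ^ (α - 1) * f s) t
      rw [sub_zero] at h
      rw [← h]
      exact intervalIntegral.integral_congr fun u _ => by simp [sub_sub_cancel]
    rw [← h1]
    have h2 := intervalIntegral.sum_integral_adjacent_intervals
      (a := fun k : ℕ => (k : ℝ) * T) (μ := volume)
      (f := fun u => u ^ (α - 1) * f (t - u)) (n := n)
      (fun k _ => weyl_intable hα hf t _ _)
    simp only [Nat.cast_zero, Nat.cast_add, Nat.cast_one, zero_mul] at h2
    rw [← h2]
  refine ⟨Φ, ?_, ?_, ?_⟩
  · intro t _
    have h := ((hSummable t).hasSum.tendsto_sum_nat).const_mul (1 / Real.Gamma α)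
    exact h.congr fun n => by rw [key t n]
  · have : Continuous Φ := by
      apply continuous_const.mul
      apply continuous_tsum _ hCsum (fun k t => hDC k t)
      intro k
      exact weyl_cont hα hf hM (by positivity) (by nlinarith [hT]) 
    exact this.continuousOn
  · intro t _
    simp only [hΦ_def]
    congr 1
    apply tsum_congr
    intro k
    apply intervalIntegral.integral_congr
    intro u _
    simp only [hD_def]
    rw [show t + T - u = (t - u) + T by ring, hper]
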